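/- Let k ≥ 1 be an integer, γ > 0, λ₁,…,λ_k > 0, K > 0, and let U : ℝ → ℝ be twice continuously differentiable with U″(x) ≥ −K for all x ∈ ℝ. Set h* = min{ 4/(K+1), min_{1≤ℓ≤k} 8/(γλ_ℓ²), 8/(2γ + 2(K+1) + γk) } and let h ∈ (0, h*). Let φ_h : ℝ^{k+2} → ℝ^{k+2} be the map assigning to each w ∈ ℝ^{k+2} the unique y ∈ ℝ^{k+2} with G(y, w, h) = 0. Then φ_h is a bijection of ℝ^{k+2} onto itself. -/

import Mathlib

open scoped BigOperators

/-- The defining map of the implicit AVF step for the quasi-Markovian GLE.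
Index `0` is the `v`-component, indices `1,…,k` (written `ℓ.succ.castSucc` for `ℓ : Fin k`)
are the `z`-components, and index `k+1` (`Fin.last (k+1)`) is the `x`-component. -/
noncomputable def G (k : ℕ) (γ : ℝ) (lam : Fin k → ℝ) (U : ℝ → ℝ) (h : ℝ)
    (y w : EuclideanSpace ℝ (Fin (k + 2))) : EuclideanSpace ℝ (Fin (k + 2)) :=
  (EuclideanSpace.equiv (Fin (k + 2)) ℝ).symm <| fun i =>
    Fin.cases
      (y 0 - w 0 + (γ * h / 4) * (y 0 + w 0)
        + h * (∫ θ in (0:ℝ)..1,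
            deriv U (w (Fin.last (k + 1)) + θ * (y (Fin.last (k + 1)) - w (Fin.last (k + 1)))))
        - (h / 2) * ∑ ℓ : Fin k, lam ℓ * (y ℓ.succ.castSucc + w ℓ.succ.castSucc))
      (fun j =>
        Fin.lastCases
          (y (Fin.last (k + 1)) - w (Fin.last (k + 1))
            - (γ * h / 4) * (y (Fin.last (k + 1)) + w (Fin.last (k + 1)))
            - (h / 2) * (y 0 + w 0))
          (fun ℓ =>
            y ℓ.succ.castSucc - w ℓ.succ.castSucc
              + (lam ℓ * h / 2) * (y 0 + w 0)
              + (γ * lam ℓ * h / 4) * (y (Fin.last (k + 1)) + w (Fin.last (k + 1))))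
          j)
      i

section Aux
open intervalIntegral

variable {k : ℕ} {γ : ℝ} {lam : Fin k → ℝ} {U : ℝ → ℝ} {h : ℝ}
  {y w : EuclideanSpace ℝ (Fin (k + 2))}

lemma G_apply (i : Fin (k+2)) : G k γ lam U h y w i =
    Fin.cases
      (y 0 - w 0 + (γ * h / 4) * (y 0 + w 0)
        + h * (∫ θ in (0:ℝ)..1,
            deriv U (w (Fin.last (k + 1)) + θ * (y (Fin.last (k + 1)) - w (Fin.last (k + 1)))))
        - (h / 2) * ∑ ℓ : Fin k, lam ℓ * (y ℓ.succ.castSucc + w ℓ.succ.castSucc))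
      (fun j =>
        Fin.lastCases
          (y (Fin.last (k + 1)) - w (Fin.last (k + 1))
            - (γ * h / 4) * (y (Fin.last (k + 1)) + w (Fin.last (k + 1)))
            - (h / 2) * (y 0 + w 0))
          (fun ℓ =>
            y ℓ.succ.castSucc - w ℓ.succ.castSucc
              + (lam ℓ * h / 2) * (y 0 + w 0)
              + (γ * lam ℓ * h / 4) * (y (Fin.last (k + 1)) + w (Fin.last (k + 1))))
          j)
      i := rfl

lemma eusymm_apply {n : ℕ} (f : Fin n → ℝ) (i : Fin n) :
    (EuclideanSpace.equiv (Fin n) ℝ).symm f i = f i := rfl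

lemma G_apply_zero : G k γ lam U h y w 0 =
    y 0 - w 0 + (γ * h / 4) * (y 0 + w 0)
      + h * (∫ θ in (0:ℝ)..1,
          deriv U (w (Fin.last (k + 1)) + θ * (y (Fin.last (k + 1)) - w (Fin.last (k + 1)))))
      - (h / 2) * ∑ ℓ : Fin k, lam ℓ * (y ℓ.succ.castSucc + w ℓ.succ.castSucc) := by
  rw [G_apply, Fin.cases_zero]

lemma G_apply_z (ℓ : Fin k) : G k γ lam U h y w ℓ.succ.castSucc =
    y ℓ.succ.castSucc - w ℓ.succ.castSucc
      + (lam ℓ * h / 2) * (y 0 + w 0)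
      + (γ * lam ℓ * h / 4) * (y (Fin.last (k + 1)) + w (Fin.last (k + 1))) := by
  rw [G_apply, ← Fin.succ_castSucc, Fin.cases_succ, Fin.lastCases_castSucc, Fin.succ_castSucc]

lemma G_apply_last : G k γ lam U h y w (Fin.last (k+1)) =
    y (Fin.last (k + 1)) - w (Fin.last (k + 1))
      - (γ * h / 4) * (y (Fin.last (k + 1)) + w (Fin.last (k + 1)))
      - (h / 2) * (y 0 + w 0) := by
  rw [G_apply, ← Fin.succ_last, Fin.cases_succ, Fin.lastCases_last]

lemma integral_one_sub_theta : (∫ θ in (0:ℝ)..1, (1 - θ)) = 1/2 := by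
  rw [intervalIntegral.integral_sub intervalIntegrable_const intervalIntegrable_id,
    integral_one, integral_id]
  norm_num

lemma intI_mono (dU : ℝ → ℝ) (hdUc : Continuous dU) (K : ℝ)
    (hmono : Monotone (fun x => dU x + K * x)) (c x₁ x₂ : ℝ) (hx : x₂ ≤ x₁) :
    (∫ θ in (0:ℝ)..1, dU (x₂ + θ * (c - x₂)))
      ≤ (∫ θ in (0:ℝ)..1, dU (x₁ + θ * (c - x₁))) + K/2 * (x₁ - x₂) := by
  have hc2 : Continuous (fun θ : ℝ => dU (x₂ + θ * (c - x₂))) := by fun_prop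
  have hc1 : Continuous (fun θ : ℝ => dU (x₁ + θ * (c - x₁))) := by fun_prop
  have hc3 : Continuous (fun θ : ℝ => K * (1 - θ) * (x₁ - x₂)) := by fun_prop
  have hi2 := hc2.intervalIntegrable (μ := MeasureTheory.volume) 0 1
  have hi1 := (hc1.add hc3).intervalIntegrable (μ := MeasureTheory.volume) 0 1
  have hle : ∀ θ ∈ Set.Icc (0:ℝ) 1,
      dU (x₂ + θ * (c - x₂)) ≤ dU (x₁ + θ * (c - x₁)) + K * (1 - θ) * (x₁ - x₂) := by
    rintro θ ⟨h0, h1⟩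
    have harg : x₂ + θ * (c - x₂) ≤ x₁ + θ * (c - x₁) := by nlinarith
    have h2 := hmono harg
    simp only at h2
    have h3 : K * (x₁ + θ * (c - x₁)) - K * (x₂ + θ * (c - x₂)) = K * ((1 - θ) * (x₁ - x₂)) := by
      ring
    nlinarith
  have h4 := intervalIntegral.integral_mono_on (by norm_num : (0:ℝ) ≤ 1) hi2 hi1 hle
  have h5 : (∫ θ in (0:ℝ)..1, (dU (x₁ + θ * (c - x₁)) + K * (1 - θ) * (x₁ - x₂)))
      = (∫ θ in (0:ℝ)..1, dU (x₁ + θ * (c - x₁))) + K/2 * (x₁ - x₂) := by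
    rw [intervalIntegral.integral_add (hc1.intervalIntegrable 0 1) (hc3.intervalIntegrable 0 1)]
    congr 1
    have he : (fun θ : ℝ => K * (1 - θ) * (x₁ - x₂)) = fun θ : ℝ => (K * (x₁ - x₂)) * (1 - θ) := by
      funext θ; ring
    rw [he, intervalIntegral.integral_const_mul, integral_one_sub_theta]
    ring
  simp only [Pi.add_apply] at h4
  linarith

lemma exists_unique_zero (Φ : ℝ → ℝ) (hΦc : Continuous Φ) (ε : ℝ) (hε : 0 < ε)
    (hdec : ∀ v₁ v₂ : ℝ, v₁ ≤ v₂ → Φ v₂ ≤ Φ v₁ - ε * (v₂ - v₁)) : ∃! v, Φ v = 0 := by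
  have hanti : StrictAnti Φ := by
    intro a b hab
    have := hdec a b hab.le
    nlinarith
  have hM0 : (0:ℝ) ≤ 1 + |Φ 0| / ε := by positivity
  have hεM : ε * (1 + |Φ 0| / ε) = ε + |Φ 0| := by field_simp
  have h1 : Φ (1 + |Φ 0| / ε) ≤ 0 := by
    have := hdec 0 (1 + |Φ 0| / ε) hM0
    have h2 := le_abs_self (Φ 0)
    nlinarith
  have h2 : 0 ≤ Φ (-(1 + |Φ 0| / ε)) := by
    have := hdec (-(1 + |Φ 0| / ε)) 0 (by linarith)
    have h3 := neg_abs_le (Φ 0)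
    nlinarith
  obtain ⟨v, -, hv⟩ := intermediate_value_Icc' (show -(1 + |Φ 0| / ε) ≤ 1 + |Φ 0| / ε by linarith)
    hΦc.continuousOn ⟨h1, h2⟩
  exact ⟨v, hv, fun u hu => hanti.injective (hu.trans hv.symm)⟩

lemma key_1d (dU : ℝ → ℝ) (hdUc : Continuous dU) (K : ℝ)
    (hmono : Monotone fun x => dU x + K * x) (h c A B C1 c1 : ℝ) (hh0 : 0 < h) (hB : 0 ≤ B)
    (hkey : c1 + h * K / 2 * B < 0) :
    ∃! v : ℝ, C1 + c1 * v
      + h * (∫ θ in (0:ℝ)..1, dU ((A - B * v) + θ * (c - (A - B * v)))) = 0 := by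
  have hint : Continuous fun v : ℝ =>
      ∫ θ in (0:ℝ)..1, dU ((A - B * v) + θ * (c - (A - B * v))) := by
    apply intervalIntegral.continuous_parametric_intervalIntegral_of_continuous'
      (μ := MeasureTheory.volume)
    exact hdUc.comp (by fun_prop)
  have hΦc : Continuous fun v : ℝ => C1 + c1 * v
      + h * (∫ θ in (0:ℝ)..1, dU ((A - B * v) + θ * (c - (A - B * v)))) := by
    exact (continuous_const.add (continuous_const.mul continuous_id)).add
      (continuous_const.mul hint)
  apply exists_unique_zero _ hΦc (-(c1 + h * K / 2 * B)) (by linarith)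
  intro v₁ v₂ h12
  have hx : A - B * v₂ ≤ A - B * v₁ := by nlinarith
  have hI := intI_mono dU hdUc K hmono c (A - B * v₁) (A - B * v₂) hx
  have hI2 := mul_le_mul_of_nonneg_left hI hh0.le
  linarith [hI2]

lemma bridge (k : ℕ) (lam zz : Fin k → ℝ) (γ h v0 c u IX A B S c1 C1 : ℝ)
    (hS : S = ∑ ℓ, (lam ℓ)^2)
    (hc1 : c1 = -1 + γ*h/4 - h^2*S/4 + h^2*S/4*(γ*B/2))
    (hC1 : C1 = v0 + γ*h/4*v0
      - h/2*((∑ ℓ, 2*(lam ℓ*zz ℓ)) + h/2*v0*S + γ*h/4*(c+A)*S)) :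
    v0 - u + γ*h/4*(v0+u) + h*IX
      - h/2 * ∑ ℓ, lam ℓ * (zz ℓ + (zz ℓ + lam ℓ*h/2*(v0+u) + γ*lam ℓ*h/4*(c + (A - B*u))))
    = C1 + c1*u + h*IX := by
  subst hS hc1 hC1
  have e : ∀ ℓ : Fin k, lam ℓ * (zz ℓ + (zz ℓ + lam ℓ*h/2*(v0+u) + γ*lam ℓ*h/4*(c + (A - B*u))))
      = 2*(lam ℓ*zz ℓ) + (h/2*(v0+u))*(lam ℓ)^2 + (γ*h/4*(c + (A - B*u)))*(lam ℓ)^2 := by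
    intro ℓ; ring
  rw [Finset.sum_congr rfl (fun ℓ _ => e ℓ), Finset.sum_add_distrib, Finset.sum_add_distrib,
    ← Finset.mul_sum, ← Finset.mul_sum, ← Finset.mul_sum]
  ring

end Aux

lemma backward_exists_unique (k : ℕ) (γ : ℝ) (hγ : 0 < γ) (lam : Fin k → ℝ)
    (K : ℝ) (hK0 : 0 ≤ K) (U : ℝ → ℝ)
    (hdUc : Continuous (deriv U)) (hmono : Monotone fun x => deriv U x + K * x)
    (h : ℝ) (hh0 : 0 < h) (hstep : γ*h/4 + h^2*K/4 < 1)
    (y : EuclideanSpace ℝ (Fin (k + 2))) :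
    ∃! w, G k γ lam U h y w = 0 := by
  have ha : 0 < γ*h/4 := by positivity
  have h1a : (0:ℝ) < 1 + γ*h/4 := by linarith
  set S : ℝ := ∑ ℓ, (lam ℓ)^2 with hS_def
  have hS0 : 0 ≤ S := Finset.sum_nonneg fun _ _ => sq_nonneg _
  set B : ℝ := h/2/(1 + γ*h/4) with hB_def
  have hB0 : 0 ≤ B := by rw [hB_def]; positivity
  set A : ℝ := ((1 - γ*h/4)*(y (Fin.last (k+1))) - h/2*(y 0))/(1 + γ*h/4) with hA_def
  set c1 : ℝ := -1 + γ*h/4 - h^2*S/4 + h^2*S/4*(γ*B/2) with hc1_def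
  set C1 : ℝ := y 0 + γ*h/4*(y 0)
    - h/2*((∑ ℓ, 2*(lam ℓ * y ℓ.succ.castSucc)) + h/2*(y 0)*S
      + γ*h/4*(y (Fin.last (k+1)) + A)*S) with hC1_def
  have hγB : γ*B/2 ≤ 1 := by
    have e : γ*B/2 = (γ*h/4)/(1 + γ*h/4) := by rw [hB_def]; field_simp; ring
    rw [e, div_le_one h1a]; linarith
  have hBle : B ≤ h/2 := by
    rw [hB_def]; exact div_le_self (by positivity) (by linarith)
  have hkey : c1 + h*K/2*B < 0 := by
    have e5 : h^2*S/4*(γ*B/2) ≤ h^2*S/4*1 := mul_le_mul_of_nonneg_left hγB (by positivity)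
    have e6 : h*K/2*B ≤ h*K/2*(h/2) := mul_le_mul_of_nonneg_left hBle (by positivity)
    rw [hc1_def]
    nlinarith [hstep]
  obtain ⟨v, hv, hvuniq⟩ := key_1d (deriv U) hdUc K hmono h (y (Fin.last (k+1))) A B C1 c1
    hh0 hB0 hkey
  have hcomp0 : ∀ w : EuclideanSpace ℝ (Fin (k+2)),
      w (Fin.last (k+1)) = A - B*(w 0) →
      (∀ ℓ : Fin k, w ℓ.succ.castSucc = y ℓ.succ.castSucc
        + lam ℓ*h/2*(y 0 + w 0) + γ*lam ℓ*h/4*(y (Fin.last (k+1)) + (A - B*(w 0)))) →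
      G k γ lam U h y w 0 = C1 + c1*(w 0)
        + h*(∫ θ in (0:ℝ)..1, deriv U ((A - B*(w 0))
            + θ*(y (Fin.last (k+1)) - (A - B*(w 0))))) := by
    intro w hx hz
    rw [G_apply_zero, hx, Finset.sum_congr rfl (fun ℓ _ => by rw [hz ℓ])]
    exact bridge k lam (fun ℓ => y ℓ.succ.castSucc) γ h (y 0) (y (Fin.last (k+1))) (w 0)
      _ A B S c1 C1 hS_def hc1_def hC1_def
  have main : ∀ w : EuclideanSpace ℝ (Fin (k+2)), G k γ lam U h y w = 0 ↔
      (w 0 = v ∧ w (Fin.last (k+1)) = A - B*v ∧ ∀ ℓ : Fin k,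
        w ℓ.succ.castSucc = y ℓ.succ.castSucc + lam ℓ*h/2*(y 0 + v)
          + γ*lam ℓ*h/4*(y (Fin.last (k+1)) + (A - B*v))) := by
    intro w
    constructor
    · intro hw
      have happ : ∀ i, G k γ lam U h y w i = 0 := fun i => by rw [hw]; rfl
      have hlast := happ (Fin.last (k+1))
      rw [G_apply_last] at hlast
      have hx : w (Fin.last (k+1)) = A - B*(w 0) := by
        have hAB : A - B*(w 0) = ((1 - γ*h/4)*(y (Fin.last (k+1))) - h/2*(y 0)
            - h/2*(w 0))/(1 + γ*h/4) := by
          rw [hA_def, hB_def]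
          field_simp
        rw [hAB, eq_div_iff h1a.ne']
        linarith [hlast]
      have hz : ∀ ℓ : Fin k, w ℓ.succ.castSucc = y ℓ.succ.castSucc
          + lam ℓ*h/2*(y 0 + w 0) + γ*lam ℓ*h/4*(y (Fin.last (k+1)) + (A - B*(w 0))) := by
        intro ℓ
        have hzeq := happ ℓ.succ.castSucc
        rw [G_apply_z] at hzeq
        rw [← hx]
        linarith [hzeq]
      have hΦ0 := (hcomp0 w hx hz).symm.trans (happ 0)
      have hw0 : w 0 = v := hvuniq (w 0) hΦ0
      refine ⟨hw0, ?_, ?_⟩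
      · rw [← hw0]; exact hx
      · intro ℓ; rw [← hw0]; exact hz ℓ
    · rintro ⟨h0, hxl, hzl⟩
      refine PiLp.ext fun i => ?_
      rw [show (0 : EuclideanSpace ℝ (Fin (k+2))) i = (0:ℝ) from rfl]
      induction i using Fin.cases with
      | zero =>
        have hx : w (Fin.last (k+1)) = A - B*(w 0) := by rw [h0]; exact hxl
        have hz : ∀ ℓ : Fin k, w ℓ.succ.castSucc = y ℓ.succ.castSucc
            + lam ℓ*h/2*(y 0 + w 0) + γ*lam ℓ*h/4*(y (Fin.last (k+1)) + (A - B*(w 0))) := by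
          intro ℓ; rw [h0]; exact hzl ℓ
        rw [hcomp0 w hx hz, h0]
        exact hv
      | succ j =>
        induction j using Fin.lastCases with
        | last =>
          rw [Fin.succ_last, G_apply_last, hxl, h0, hA_def, hB_def]
          field_simp
          ring
        | cast ℓ =>
          rw [Fin.succ_castSucc, G_apply_z, hzl ℓ, hxl, h0]
          ring
  set W : EuclideanSpace ℝ (Fin (k+2)) := (EuclideanSpace.equiv (Fin (k+2)) ℝ).symm fun i =>
      Fin.cases v (fun j => Fin.lastCases (A - B*v)
        (fun ℓ => y ℓ.succ.castSucc + lam ℓ*h/2*(y 0 + v)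
          + γ*lam ℓ*h/4*(y (Fin.last (k+1)) + (A - B*v))) j) i with hW_def
  have hW0 : W 0 = v := by rw [hW_def, eusymm_apply, Fin.cases_zero]
  have hWlast : W (Fin.last (k+1)) = A - B*v := by
    rw [hW_def, eusymm_apply, ← Fin.succ_last, Fin.cases_succ, Fin.lastCases_last]
  have hWz : ∀ ℓ : Fin k, W ℓ.succ.castSucc = y ℓ.succ.castSucc + lam ℓ*h/2*(y 0 + v)
      + γ*lam ℓ*h/4*(y (Fin.last (k+1)) + (A - B*v)) := by
    intro ℓ
    rw [hW_def, eusymm_apply, ← Fin.succ_castSucc, Fin.cases_succ, Fin.lastCases_castSucc,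
      Fin.succ_castSucc]
  refine ⟨W, (main W).mpr ⟨hW0, hWlast, hWz⟩, ?_⟩
  intro w hw
  obtain ⟨h0, hxl, hzl⟩ := (main w).mp hw
  refine PiLp.ext fun i => ?_
  induction i using Fin.cases with
  | zero => rw [h0, hW0]
  | succ j =>
    induction j using Fin.lastCases with
    | last => rw [Fin.succ_last, hxl, hWlast]
    | cast ℓ => rw [Fin.succ_castSucc, hzl ℓ, hWz ℓ]

/-- the solution map `φ_h` of the implicit AVF step, assigning to `w`
the unique `y` with `G(y, w, h) = 0`, is a bijection of `ℝ^{k+2}` onto itself. -/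
theorem stmt_5 (k : ℕ) (hk : 1 ≤ k) (γ : ℝ) (hγ : 0 < γ)
    (lam : Fin k → ℝ) (hlam : ∀ ℓ, 0 < lam ℓ) (K : ℝ) (hK : 0 < K)
    (U : ℝ → ℝ) (hU : ContDiff ℝ 2 U) (hU'' : ∀ x : ℝ, -K ≤ deriv (deriv U) x)
    (h : ℝ) (hh0 : 0 < h)
    (hh : h < min (4 / (K + 1))
      (min ((Finset.univ : Finset (Fin k)).inf' ⟨⟨0, hk⟩, Finset.mem_univ _⟩
          (fun ℓ => 8 / (γ * lam ℓ ^ 2)))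
        (8 / (2 * γ + 2 * (K + 1) + γ * (k : ℝ)))))
    (φ : EuclideanSpace ℝ (Fin (k + 2)) → EuclideanSpace ℝ (Fin (k + 2)))
    (hφ : ∀ w, G k γ lam U h (φ w) w = 0)
    (hφuniq : ∀ w y, G k γ lam U h y w = 0 → y = φ w) :
    Function.Bijective φ := by
  -- facts about U
  have h2 : ContDiff ℝ (1 + 1 : WithTop ℕ∞) U := by
    rw [show (1 + 1 : WithTop ℕ∞) = 2 by norm_num]; exact hU
  rw [contDiff_succ_iff_deriv] at h2
  obtain ⟨hdiffU, -, hdU1⟩ := h2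
  have hdiff : Differentiable ℝ (deriv U) := (contDiff_one_iff_deriv.mp (by exact_mod_cast hdU1)).1
  have hdUc : Continuous (deriv U) := hdU1.continuous
  have hmono : Monotone (fun x => deriv U x + K * x) := by
    have hg : Differentiable ℝ (fun x => deriv U x + K * x) := hdiff.add (by fun_prop)
    apply monotone_of_deriv_nonneg hg
    intro x
    rw [show (fun x => deriv U x + K * x) = deriv U + fun x => K * x from rfl,
      deriv_add (hdiff x) (by fun_prop : DifferentiableAt ℝ (fun x : ℝ => K * x) x)]
    have hd : deriv (fun x : ℝ => K * x) x = K := by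
      simpa using deriv_const_mul K (differentiable_id.differentiableAt (f := fun x : ℝ => x))
    rw [hd]
    linarith [hU'' x]
  -- the step-size estimate
  have hhA : h < 4 / (K + 1) := hh.trans_le (min_le_left _ _)
  have hhD : h < 8 / (2 * γ + 2 * (K + 1) + γ * (k : ℝ)) :=
    hh.trans_le ((min_le_right _ _).trans (min_le_right _ _))
  have hstep : γ * h / 4 + h ^ 2 * K / 4 < 1 := by
    have hk1 : (1 : ℝ) ≤ k := by exact_mod_cast hk
    have hD : 0 < 2 * γ + 2 * (K + 1) + γ * (k : ℝ) := by positivity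
    have h1 : h * (2 * γ + 2 * (K + 1) + γ * (k : ℝ)) < 8 := (lt_div_iff₀ hD).mp hhD
    have h2 : h * (K + 1) < 4 := (lt_div_iff₀ (by positivity)).mp hhA
    have e1 : h * K * (K + 1) < 4 * K := by nlinarith
    have e2 : 4 * K ≤ (K + 1) ^ 2 := by nlinarith [sq_nonneg (K - 1)]
    have e3 : h * K < K + 1 := by nlinarith
    have e4 : γ * h + h * (K + 1) < 4 := by
      nlinarith [mul_pos (mul_pos hγ (show (0:ℝ) < k by linarith)) hh0]
    nlinarith
  have back := fun y => backward_exists_unique k γ hγ lam K hK.le U hdUc hmono h hh0 hstep y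
  constructor
  · intro a b hab
    obtain ⟨w, hw, huniq⟩ := back (φ a)
    have h1 : a = w := huniq a (hφ a)
    have h2 : b = w := huniq b (by rw [hab]; exact hφ b)
    rw [h1, h2]
  · intro y
    obtain ⟨w, hw, -⟩ := back y
    exact ⟨w, (hφuniq w y hw).symm⟩
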